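/- Let f be ℒ×ℬ-measurable and satisfy |f(t,x₁,u₁) − f(t,x₂,u₂)| ≤ k_x|x₁−x₂| + k_u|u₁−u₂| for a.e. t ∈ [a,b], all x₁,x₂ ∈ ℝⁿ and u₁,u₂ ∈ U(t); let U have ℒ×ℬ-measurable graph, closed values, and |u| ≤ c for all u ∈ U(t), a.e. t; and let C ⊆ ℝⁿ × ℝⁿ be closed. Then d_V((x,u,e),(x',u',e')) := |x(a) − x'(a)| + |e − e'| + ∫_a^b |u(t) − u'(t)| dt defines a metric on V (controls being identified when equal a.e.), and (V, d_V) is a complete metric space. -/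

import Mathlib

open MeasureTheory Set Filter

noncomputable section

/-- Shorthand for Euclidean space `ℝⁿ`. -/
abbrev Vec (n : ℕ) := EuclideanSpace ℝ (Fin n)

/-- Membership in the set `V`: `(x,u)` is a process of the control system (`x` absolutely
continuous, encoded via an integrable derivative and the integral representation, with
`ẋ(t) = f(t,x(t),u(t))` a.e. and `u(t) ∈ U(t)` a.e.), `e ∈ ℝⁿ`, `(x(a), e) ∈ C`, and
`‖x - x*‖_∞ ≤ ε` on `[a,b]`. -/
def InV {n k : ℕ} (a b : ℝ) (f : ℝ → Vec n → Vec k → Vec n) (U : ℝ → Set (Vec k))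
    (C : Set (Vec n × Vec n)) (xstar : ℝ → Vec n) (ε : ℝ)
    (x : ℝ → Vec n) (u : ℝ → Vec k) (e : Vec n) : Prop :=
  AEStronglyMeasurable u (volume.restrict (Icc a b)) ∧
  (∀ᵐ t ∂(volume.restrict (Icc a b)), u t ∈ U t) ∧
  (∃ x' : ℝ → Vec n, IntegrableOn x' (Icc a b) ∧
    (∀ t ∈ Icc a b, x t = x a + ∫ s in a..t, x' s) ∧
    (∀ᵐ t ∂(volume.restrict (Icc a b)), x' t = f t (x t) (u t))) ∧
  (x a, e) ∈ C ∧
  (∀ t ∈ Icc a b, ‖x t - xstar t‖ ≤ ε)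

/-- The metric `d_V` on `V`. -/
def dV {n k : ℕ} (a b : ℝ) (x : ℝ → Vec n) (u : ℝ → Vec k) (e : Vec n)
    (x₁ : ℝ → Vec n) (u₁ : ℝ → Vec k) (e₁ : Vec n) : ℝ :=
  ‖x a - x₁ a‖ + ‖e - e₁‖ + ∫ t in Icc a b, ‖u t - u₁ t‖

open Topology intervalIntegral

lemma gronwall_int {a b K A : ℝ} (hab : a ≤ b) (hK : 0 ≤ K) (hA : 0 ≤ A) {g : ℝ → ℝ}
    (hg : ContinuousOn g (Icc a b)) (hg0 : ∀ t ∈ Icc a b, 0 ≤ g t)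
    (hineq : ∀ t ∈ Icc a b, g t ≤ A + K * ∫ s in a..t, g s) :
    ∀ t ∈ Icc a b, g t ≤ A * Real.exp (K * (t - a)) := by
  set F : ℝ → ℝ := fun r => ∫ s in a..r, g s with hF
  have hgint : IntegrableOn g (Icc a b) := hg.integrableOn_compact isCompact_Icc
  have hFcont : ContinuousOn F (Icc a b) := by
    have := intervalIntegral.continuousOn_primitive_interval
      (a := a) (b := b) (μ := volume) (f := g) (by rwa [uIcc_of_le hab])
    rwa [uIcc_of_le hab] at this
  have hFnonneg : ∀ t ∈ Icc a b, 0 ≤ F t := by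
    intro t ht
    apply intervalIntegral.integral_nonneg ht.1
    exact fun s hs => hg0 s ⟨hs.1, hs.2.trans ht.2⟩
  have hmem : ∀ x ∈ Ico a b, Icc a b ∈ 𝓝[>] x := by
    intro x hx
    rw [mem_nhdsWithin]
    exact ⟨Iio b, isOpen_Iio, hx.2, fun y hy => ⟨hx.1.trans hy.2.le, hy.1.le⟩⟩
  have hFderiv : ∀ x ∈ Ico a b, HasDerivWithinAt F (g x) (Ici x) x := by
    intro x hx
    apply intervalIntegral.integral_hasDerivWithinAt_right (t := Ioi x)
    · exact (hg.mono (by rw [uIcc_of_le hx.1]; exact Icc_subset_Icc le_rfl hx.2.le)).intervalIntegrable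
    · exact ⟨Icc a b, hmem x hx, hg.aestronglyMeasurable measurableSet_Icc⟩
    · exact (hg.continuousWithinAt ⟨hx.1, hx.2.le⟩).mono_left (nhdsWithin_le_iff.mpr (hmem x hx))
  have hmain := norm_le_gronwallBound_of_norm_deriv_right_le (δ := 0) (K := K) (ε := A)
    hFcont hFderiv (by simp [hF]) ?_
  · intro t ht
    have h1 := hmain t ht
    rw [Real.norm_eq_abs, abs_of_nonneg (hFnonneg t ht)] at h1
    have h2 := hineq t ht
    rcases eq_or_ne K 0 with hK0 | hK0
    · subst hK0; simpa using h2.trans (by simp)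
    · rw [gronwallBound_of_K_ne_0 hK0] at h1
      have : g t ≤ A + K * (0 * Real.exp (K * (t - a)) + A / K * (Real.exp (K * (t - a)) - 1)) :=
        h2.trans (by nlinarith [hK.lt_of_ne (Ne.symm hK0)])
      calc g t ≤ _ := this
        _ = A * Real.exp (K * (t - a)) := by field_simp; ring
  · intro x hx
    have hx' : x ∈ Icc a b := ⟨hx.1, hx.2.le⟩
    rw [Real.norm_eq_abs, abs_of_nonneg (hg0 x hx'), Real.norm_eq_abs,
      abs_of_nonneg (hFnonneg x hx')]
    linarith [hineq x hx']

variable {n k : ℕ} {a b : ℝ} {f : ℝ → Vec n → Vec k → Vec n} {U : ℝ → Set (Vec k)}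
  {kx ku c ε : ℝ} {C : Set (Vec n × Vec n)} {xstar : ℝ → Vec n}

lemma finmeas : IsFiniteMeasure (volume.restrict (Icc a b)) :=
  ⟨by rw [Measure.restrict_apply_univ]; exact measure_Icc_lt_top⟩

lemma InV.contOn (hab : a ≤ b) {x u e} (h : InV a b f U C xstar ε x u e) :
    ContinuousOn x (Icc a b) := by
  obtain ⟨-, -, ⟨x', hx'int, hxrep, -⟩, -, -⟩ := h
  have h2 : ContinuousOn (fun t => x a + ∫ s in a..t, x' s) (Icc a b) := by
    apply continuousOn_const.add
    have := intervalIntegral.continuousOn_primitive_interval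
      (a := a) (b := b) (μ := volume) (f := x') (by rwa [uIcc_of_le hab])
    rwa [uIcc_of_le hab] at this
  exact h2.congr hxrep

lemma InV.norm_ctrl_le (hbdd : ∀ᵐ t ∂(volume.restrict (Icc a b)), ∀ w ∈ U t, ‖w‖ ≤ c)
    {x u e} (h : InV a b f U C xstar ε x u e) :
    ∀ᵐ t ∂(volume.restrict (Icc a b)), ‖u t‖ ≤ c :=
  h.2.1.mp (hbdd.mono fun t hb hu => hb _ hu)

lemma InV.ctrl_integrable (hbdd : ∀ᵐ t ∂(volume.restrict (Icc a b)), ∀ w ∈ U t, ‖w‖ ≤ c)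
    {x u e} (h : InV a b f U C xstar ε x u e) :
    Integrable u (volume.restrict (Icc a b)) := by
  haveI := finmeas (a := a) (b := b)
  exact (integrable_const c).mono' h.1 (h.norm_ctrl_le hbdd)

lemma ctrl_sub_integrable (hbdd : ∀ᵐ t ∂(volume.restrict (Icc a b)), ∀ w ∈ U t, ‖w‖ ≤ c)
    {x u e x₁ u₁ e₁} (h : InV a b f U C xstar ε x u e) (h₁ : InV a b f U C xstar ε x₁ u₁ e₁) :
    Integrable (fun t => ‖u t - u₁ t‖) (volume.restrict (Icc a b)) :=
  ((h.ctrl_integrable hbdd).sub (h₁.ctrl_integrable hbdd)).norm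

/-- Key uniform estimate via Gronwall. -/
lemma key_estimate (hab : a ≤ b) (hkx : 0 ≤ kx) (hku : 0 ≤ ku)
    (hflip : ∀ᵐ t ∂(volume.restrict (Icc a b)), ∀ x₁ x₂ : Vec n, ∀ u₁ ∈ U t, ∀ u₂ ∈ U t,
      ‖f t x₁ u₁ - f t x₂ u₂‖ ≤ kx * ‖x₁ - x₂‖ + ku * ‖u₁ - u₂‖)
    (hbdd : ∀ᵐ t ∂(volume.restrict (Icc a b)), ∀ w ∈ U t, ‖w‖ ≤ c)
    {x u e x₁ u₁ e₁} (h : InV a b f U C xstar ε x u e) (h₁ : InV a b f U C xstar ε x₁ u₁ e₁) :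
    ∀ t ∈ Icc a b, ‖x t - x₁ t‖ ≤
      (‖x a - x₁ a‖ + ku * ∫ t in Icc a b, ‖u t - u₁ t‖) * Real.exp (kx * (b - a)) := by
  have hxc := InV.contOn hab h
  have hxc₁ := InV.contOn hab h₁
  have hdu : Integrable (fun t => ‖u t - u₁ t‖) (volume.restrict (Icc a b)) :=
    ctrl_sub_integrable hbdd h h₁
  obtain ⟨humeas, humem, ⟨x', hx'int, hxrep, hx'ae⟩, -, -⟩ := h
  obtain ⟨humeas₁, humem₁, ⟨x₁', hx₁'int, hxrep₁, hx₁'ae⟩, -, -⟩ := h₁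
  have hduOn : IntegrableOn (fun s => ‖u s - u₁ s‖) (Icc a b) := hdu
  set J : ℝ := ∫ t in Icc a b, ‖u t - u₁ t‖ with hJ
  have hJ0 : 0 ≤ J := integral_nonneg fun t => norm_nonneg _
  set A : ℝ := ‖x a - x₁ a‖ + ku * J with hA
  have hA0 : 0 ≤ A := add_nonneg (norm_nonneg _) (mul_nonneg hku hJ0)
  -- a.e. pointwise bound on the derivative difference
  have hptw : ∀ᵐ s ∂(volume.restrict (Icc a b)),
      ‖x' s - x₁' s‖ ≤ kx * ‖x s - x₁ s‖ + ku * ‖u s - u₁ s‖ := by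
    filter_upwards [hflip, humem, humem₁, hx'ae, hx₁'ae] with s hf hu hu₁ hd hd₁
    rw [hd, hd₁]; exact hf _ _ _ hu _ hu₁
  set g : ℝ → ℝ := fun s => ‖x s - x₁ s‖ with hg
  have hgcont : ContinuousOn g (Icc a b) := (hxc.sub hxc₁).norm
  have hgint : IntegrableOn g (Icc a b) := hgcont.integrableOn_compact isCompact_Icc
  have hineq : ∀ t ∈ Icc a b, g t ≤ A + kx * ∫ s in a..t, g s := by
    intro t ht
    have hsubI : Icc a t ⊆ Icc a b := Icc_subset_Icc le_rfl ht.2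
    have hii : IntervalIntegrable x' volume a t := by
      apply IntegrableOn.intervalIntegrable
      rw [uIcc_of_le ht.1]; exact hx'int.mono_set hsubI
    have hii₁ : IntervalIntegrable x₁' volume a t := by
      apply IntegrableOn.intervalIntegrable
      rw [uIcc_of_le ht.1]; exact hx₁'int.mono_set hsubI
    have hrhsint : IntegrableOn (fun s => kx * g s + ku * ‖u s - u₁ s‖) (Icc a b) :=
      (hgint.const_mul kx).add (hdu.const_mul ku)
    have hiirhs : IntervalIntegrable (fun s => kx * g s + ku * ‖u s - u₁ s‖) volume a t := by
      apply IntegrableOn.intervalIntegrable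
      rw [uIcc_of_le ht.1]; exact hrhsint.mono_set hsubI
    have hiinorm : IntervalIntegrable (fun s => ‖x' s - x₁' s‖) volume a t :=
      (hii.sub hii₁).norm
    have hiig : IntervalIntegrable g volume a t := by
      apply IntegrableOn.intervalIntegrable
      rw [uIcc_of_le ht.1]; exact hgint.mono_set hsubI
    have hiidu : IntervalIntegrable (fun s => ‖u s - u₁ s‖) volume a t := by
      apply IntegrableOn.intervalIntegrable
      rw [uIcc_of_le ht.1]; exact hduOn.mono_set hsubI
    have hrep : x t - x₁ t = (x a - x₁ a) + ∫ s in a..t, (x' s - x₁' s) := by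
      rw [hxrep t ht, hxrep₁ t ht, intervalIntegral.integral_sub hii hii₁]; abel
    have step1 : g t ≤ ‖x a - x₁ a‖ + ∫ s in a..t, ‖x' s - x₁' s‖ := by
      rw [hg]
      calc ‖x t - x₁ t‖ ≤ ‖x a - x₁ a‖ + ‖∫ s in a..t, (x' s - x₁' s)‖ := by
            rw [hrep]; exact norm_add_le _ _
        _ ≤ ‖x a - x₁ a‖ + ∫ s in a..t, ‖x' s - x₁' s‖ := by
            gcongr
            exact intervalIntegral.norm_integral_le_integral_norm ht.1
    have step2 : (∫ s in a..t, ‖x' s - x₁' s‖) ≤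
        ∫ s in a..t, (kx * g s + ku * ‖u s - u₁ s‖) := by
      apply intervalIntegral.integral_mono_ae_restrict ht.1 hiinorm hiirhs
      exact ae_restrict_of_ae_restrict_of_subset hsubI hptw
    have step3 : (∫ s in a..t, (kx * g s + ku * ‖u s - u₁ s‖)) =
        kx * (∫ s in a..t, g s) + ku * ∫ s in a..t, ‖u s - u₁ s‖ := by
      rw [intervalIntegral.integral_add (hiig.const_mul kx) (hiidu.const_mul ku),
        intervalIntegral.integral_const_mul, intervalIntegral.integral_const_mul]
    have step4 : (∫ s in a..t, ‖u s - u₁ s‖) ≤ J := by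
      rw [intervalIntegral.integral_of_le ht.1, hJ]
      apply setIntegral_mono_set hdu
      · exact Eventually.of_forall fun s => norm_nonneg _
      · exact (Ioc_subset_Icc_self.trans hsubI).eventuallyLE
    have := step1.trans (by linarith [mul_le_mul_of_nonneg_left step4 hku] :
      ‖x a - x₁ a‖ + (∫ s in a..t, ‖x' s - x₁' s‖) ≤ A + kx * ∫ s in a..t, g s)
    exact this
  have := gronwall_int hab hkx hA0 hgcont (fun t _ => norm_nonneg _) hineq
  intro t ht
  calc g t ≤ A * Real.exp (kx * (t - a)) := this t ht
    _ ≤ A * Real.exp (kx * (b - a)) := by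
        apply mul_le_mul_of_nonneg_left _ hA0
        exact Real.exp_le_exp.2 (by nlinarith [ht.2])
/-- `d_V` is a metric on `V` — nonnegative, symmetric, satisfying the
triangle inequality, and separating points up to identification of controls equal a.e.
(and of the trajectories they determine on `[a,b]`) — and `(V, d_V)` is a complete metric
space: every `d_V`-Cauchy sequence in `V` converges in `d_V` to an element of `V`. -/
theorem dV_complete_metric_space
    {n k : ℕ} (a b : ℝ) (hab : a < b)
    (f : ℝ → Vec n → Vec k → Vec n) (U : ℝ → Set (Vec k))
    (kx ku : ℝ) (hkx : 0 ≤ kx) (hku : 0 ≤ ku)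
    (hfmeas : Measurable fun q : ℝ × Vec n × Vec k => f q.1 q.2.1 q.2.2)
    (hflip : ∀ᵐ t ∂(volume.restrict (Icc a b)), ∀ x₁ x₂ : Vec n, ∀ u₁ ∈ U t, ∀ u₂ ∈ U t,
      ‖f t x₁ u₁ - f t x₂ u₂‖ ≤ kx * ‖x₁ - x₂‖ + ku * ‖u₁ - u₂‖)
    (hgraph : MeasurableSet {q : ℝ × Vec k | q.1 ∈ Icc a b ∧ q.2 ∈ U q.1})
    (hUclosed : ∀ t, IsClosed (U t))
    (c : ℝ) (hc : 0 < c)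
    (hbdd : ∀ᵐ t ∂(volume.restrict (Icc a b)), ∀ w ∈ U t, ‖w‖ ≤ c)
    (C : Set (Vec n × Vec n)) (hC : IsClosed C)
    (xstar : ℝ → Vec n) (hxstar : Continuous xstar) (ε : ℝ) (hε : 0 < ε) :
    -- nonnegativity
    (∀ x u e x₁ u₁ e₁, InV a b f U C xstar ε x u e → InV a b f U C xstar ε x₁ u₁ e₁ →
      0 ≤ dV a b x u e x₁ u₁ e₁) ∧
    -- symmetry
    (∀ x u e x₁ u₁ e₁, InV a b f U C xstar ε x u e → InV a b f U C xstar ε x₁ u₁ e₁ →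
      dV a b x u e x₁ u₁ e₁ = dV a b x₁ u₁ e₁ x u e) ∧
    -- triangle inequality
    (∀ x u e x₁ u₁ e₁ x₂ u₂ e₂,
      InV a b f U C xstar ε x u e → InV a b f U C xstar ε x₁ u₁ e₁ →
      InV a b f U C xstar ε x₂ u₂ e₂ →
      dV a b x u e x₂ u₂ e₂ ≤ dV a b x u e x₁ u₁ e₁ + dV a b x₁ u₁ e₁ x₂ u₂ e₂) ∧
    -- separation, modulo identification of controls equal a.e.
    (∀ x u e x₁ u₁ e₁, InV a b f U C xstar ε x u e → InV a b f U C xstar ε x₁ u₁ e₁ →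
      dV a b x u e x₁ u₁ e₁ = 0 →
      (∀ t ∈ Icc a b, x t = x₁ t) ∧ e = e₁ ∧
        u =ᵐ[volume.restrict (Icc a b)] u₁) ∧
    -- completeness
    (∀ (xseq : ℕ → ℝ → Vec n) (useq : ℕ → ℝ → Vec k) (eseq : ℕ → Vec n),
      (∀ i, InV a b f U C xstar ε (xseq i) (useq i) (eseq i)) →
      (∀ δ : ℝ, 0 < δ → ∃ N, ∀ m ≥ N, ∀ m' ≥ N,
        dV a b (xseq m) (useq m) (eseq m) (xseq m') (useq m') (eseq m') < δ) →
      ∃ x u e, InV a b f U C xstar ε x u e ∧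
        Tendsto (fun i => dV a b (xseq i) (useq i) (eseq i) x u e) atTop (nhds 0)) := by
  have hab' : a ≤ b := hab.le
  refine ⟨?_, ?_, ?_, ?_, ?_⟩
  · -- nonnegativity
    intro x u e x₁ u₁ e₁ _ _
    unfold dV
    have h3 : (0:ℝ) ≤ ∫ t in Icc a b, ‖u t - u₁ t‖ := integral_nonneg fun t => norm_nonneg _
    positivity
  · -- symmetry
    intro x u e x₁ u₁ e₁ _ _
    unfold dV
    rw [norm_sub_rev (x a), norm_sub_rev e]
    have : ∀ tt : ℝ, ‖u tt - u₁ tt‖ = ‖u₁ tt - u tt‖ := fun tt => norm_sub_rev _ _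
    simp only [this]
  · -- triangle
    intro x u e x₁ u₁ e₁ x₂ u₂ e₂ h h₁ h₂
    have i01 := ctrl_sub_integrable hbdd h h₁
    have i12 := ctrl_sub_integrable hbdd h₁ h₂
    have i02 := ctrl_sub_integrable hbdd h h₂
    have hint : (∫ t in Icc a b, ‖u t - u₂ t‖) ≤
        (∫ t in Icc a b, ‖u t - u₁ t‖) + ∫ t in Icc a b, ‖u₁ t - u₂ t‖ := by
      rw [← integral_add i01 i12]
      apply integral_mono i02 (i01.add i12)
      intro t
      have := norm_add_le (u t - u₁ t) (u₁ t - u₂ t)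
      simpa using this
    have t1 : ‖x a - x₂ a‖ ≤ ‖x a - x₁ a‖ + ‖x₁ a - x₂ a‖ := by
      have := norm_add_le (x a - x₁ a) (x₁ a - x₂ a); simpa using this
    have t2 : ‖e - e₂‖ ≤ ‖e - e₁‖ + ‖e₁ - e₂‖ := by
      have := norm_add_le (e - e₁) (e₁ - e₂); simpa using this
    unfold dV
    linarith
  · -- separation
    intro x u e x₁ u₁ e₁ h h₁ hd
    have i01 := ctrl_sub_integrable hbdd h h₁
    have h3 : (0:ℝ) ≤ ∫ t in Icc a b, ‖u t - u₁ t‖ := integral_nonneg fun t => norm_nonneg _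
    have hxa : ‖x a - x₁ a‖ = 0 ∧ ‖e - e₁‖ = 0 ∧ (∫ t in Icc a b, ‖u t - u₁ t‖) = 0 := by
      unfold dV at hd
      refine ⟨by nlinarith [norm_nonneg (x a - x₁ a), norm_nonneg (e - e₁)],
        by nlinarith [norm_nonneg (x a - x₁ a), norm_nonneg (e - e₁)],
        by nlinarith [norm_nonneg (x a - x₁ a), norm_nonneg (e - e₁)]⟩
    obtain ⟨h1, h2, h3'⟩ := hxa
    have hueq : u =ᵐ[volume.restrict (Icc a b)] u₁ := by
      have := (integral_eq_zero_iff_of_nonneg (fun t => norm_nonneg (u t - u₁ t)) i01).1 h3'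
      filter_upwards [this] with t ht
      have : ‖u t - u₁ t‖ = 0 := ht
      rwa [norm_eq_zero, sub_eq_zero] at this
    refine ⟨?_, by rwa [norm_eq_zero, sub_eq_zero] at h2, hueq⟩
    intro t ht
    have := key_estimate hab' hkx hku hflip hbdd h h₁ t ht
    rw [h1, h3'] at this
    simp only [mul_zero, zero_add, zero_mul] at this
    have h0 := norm_nonneg (x t - x₁ t)
    have : ‖x t - x₁ t‖ = 0 := le_antisymm this h0
    rwa [norm_eq_zero, sub_eq_zero] at this
  · -- completeness
    intro xseq useq eseq hin hcauchy
    set μ := volume.restrict (Icc a b) with hμdef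
    haveI : IsFiniteMeasure μ := finmeas
    have haI : a ∈ Icc a b := ⟨le_refl a, hab'⟩
    -- component bounds by dV
    have hcomp : ∀ m m' : ℕ, ‖xseq m a - xseq m' a‖ ≤
          dV a b (xseq m) (useq m) (eseq m) (xseq m') (useq m') (eseq m') ∧
        ‖eseq m - eseq m'‖ ≤
          dV a b (xseq m) (useq m) (eseq m) (xseq m') (useq m') (eseq m') ∧
        (∫ t in Icc a b, ‖useq m t - useq m' t‖) ≤
          dV a b (xseq m) (useq m) (eseq m) (xseq m') (useq m') (eseq m') := by
      intro m m'
      have h3 : (0:ℝ) ≤ ∫ t in Icc a b, ‖useq m t - useq m' t‖ :=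
        integral_nonneg fun t => norm_nonneg _
      have h1 := norm_nonneg (xseq m a - xseq m' a)
      have h2 := norm_nonneg (eseq m - eseq m')
      unfold dV
      exact ⟨by linarith, by linarith, by linarith⟩
    -- controls in L¹
    have hui : ∀ i, Integrable (useq i) μ := fun i => (hin i).ctrl_integrable hbdd
    have hmem : ∀ i, MemLp (useq i) 1 μ := fun i => memLp_one_iff_integrable.2 (hui i)
    set vi : ℕ → Lp (Vec k) 1 μ := fun i => ((hmem i).toLp (useq i)) with hvi
    have hinteq : ∀ g : ℝ → Vec k, Integrable g μ →
        (∫ t in Icc a b, ‖g t‖) = (eLpNorm g 1 μ).toReal := by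
      intro g hg
      rw [eLpNorm_one_eq_lintegral_enorm, ← ofReal_integral_norm_eq_lintegral_enorm hg,
        ENNReal.toReal_ofReal (integral_nonneg fun t => norm_nonneg _)]
    have hdist : ∀ i j, dist (vi i) (vi j) = ∫ t in Icc a b, ‖useq i t - useq j t‖ := by
      intro i j
      rw [dist_eq_norm, hvi]
      have h1 : (hmem i).toLp (useq i) - (hmem j).toLp (useq j)
          = ((hmem i).sub (hmem j)).toLp (useq i - useq j) := (MemLp.toLp_sub _ _).symm
      rw [h1, Lp.norm_toLp _ _]
      exact (show (∫ t in Icc a b, ‖useq i t - useq j t‖) = (eLpNorm (useq i - useq j) 1 μ).toReal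
        from hinteq _ ((hui i).sub (hui j))).symm
    have hcauv : CauchySeq vi := by
      rw [Metric.cauchySeq_iff]
      intro δ hδ
      obtain ⟨N, hN⟩ := hcauchy δ hδ
      exact ⟨N, fun m hm m' hm' =>
        lt_of_le_of_lt (by rw [hdist]; exact (hcomp m m').2.2) (hN m hm m' hm')⟩
    obtain ⟨w, hw⟩ := cauchySeq_tendsto_of_complete hcauv
    set u : ℝ → Vec k := ⇑w with hu
    have humeasW : AEStronglyMeasurable u μ := Lp.aestronglyMeasurable w
    have huint : Integrable u μ := memLp_one_iff_integrable.1 (Lp.memLp w)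
    -- L¹ convergence of controls (full sequence)
    have hL1 : Tendsto (fun i => ∫ t in Icc a b, ‖useq i t - u t‖) atTop (𝓝 0) := by
      have h1 : Tendsto (fun i => dist (vi i) w) atTop (𝓝 0) :=
        tendsto_iff_dist_tendsto_zero.1 hw
      have h2 : ∀ i, dist (vi i) w = ∫ t in Icc a b, ‖useq i t - u t‖ := by
        intro i
        rw [dist_eq_norm, Lp.norm_def, eLpNorm_congr_ae
          ((Lp.coeFn_sub _ _).trans (((hmem i).coeFn_toLp).sub (EventuallyEq.refl _ u)))]
        exact (show (∫ t in Icc a b, ‖useq i t - u t‖) = (eLpNorm (useq i - u) 1 μ).toReal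
          from hinteq _ ((hui i).sub huint)).symm
      simpa only [h2] using h1
    -- a.e. convergent subsequence
    have heLp : Tendsto (fun i => eLpNorm (useq i - u) 1 μ) atTop (𝓝 0) := by
      have : ∀ i, eLpNorm (useq i - u) 1 μ
          = ENNReal.ofReal (∫ t in Icc a b, ‖useq i t - u t‖) := by
        intro i
        rw [show (∫ t in Icc a b, ‖useq i t - u t‖) = (eLpNorm (useq i - u) 1 μ).toReal
            from hinteq _ ((hui i).sub huint), ENNReal.ofReal_toReal
            (((hmem i).sub (memLp_one_iff_integrable.2 huint)).eLpNorm_ne_top)]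
      simp only [this]
      have := ENNReal.tendsto_ofReal (α := ℕ) hL1
      simpa using this
    have htim : TendstoInMeasure μ useq atTop u :=
      tendstoInMeasure_of_tendsto_eLpNorm one_ne_zero
        (fun i => (hui i).aestronglyMeasurable) humeasW heLp
    obtain ⟨ns, hns_mono, hae⟩ := htim.exists_seq_tendsto_ae
    have humem : ∀ᵐ t ∂μ, u t ∈ U t := by
      have hall : ∀ᵐ t ∂μ, ∀ j : ℕ, useq (ns j) t ∈ U t :=
        ae_all_iff.2 fun j => (hin (ns j)).2.1
      filter_upwards [hall, hae] with t h1 h2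
      exact (hUclosed t).mem_of_tendsto h2 (Eventually.of_forall h1)
    -- limits of initial points and endpoints
    have hxacau : CauchySeq (fun i => xseq i a) := by
      rw [Metric.cauchySeq_iff]
      intro δ hδ
      obtain ⟨N, hN⟩ := hcauchy δ hδ
      exact ⟨N, fun m hm m' hm' =>
        lt_of_le_of_lt (by rw [dist_eq_norm]; exact (hcomp m m').1) (hN m hm m' hm')⟩
    have hecau : CauchySeq eseq := by
      rw [Metric.cauchySeq_iff]
      intro δ hδ
      obtain ⟨N, hN⟩ := hcauchy δ hδ
      exact ⟨N, fun m hm m' hm' =>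
        lt_of_le_of_lt (by rw [dist_eq_norm]; exact (hcomp m m').2.1) (hN m hm m' hm')⟩
    obtain ⟨e, he⟩ := cauchySeq_tendsto_of_complete hecau
    -- uniform Cauchy estimate for trajectories
    set Ec : ℝ := (1 + ku) * Real.exp (kx * (b - a)) with hEc
    have hEcpos : 0 < Ec := by positivity
    have hkey : ∀ m m', ∀ t ∈ Icc a b, ‖xseq m t - xseq m' t‖ ≤
        Ec * dV a b (xseq m) (useq m) (eseq m) (xseq m') (useq m') (eseq m') := by
      intro m m' t ht
      have h1 := key_estimate hab' hkx hku hflip hbdd (hin m) (hin m') t ht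
      have h2 := (hcomp m m').1
      have h3 := (hcomp m m').2.2
      have hexp := Real.exp_pos (kx * (b - a))
      have hd0 : 0 ≤ dV a b (xseq m) (useq m) (eseq m) (xseq m') (useq m') (eseq m') :=
        le_trans (norm_nonneg _) h2
      set d := dV a b (xseq m) (useq m) (eseq m) (xseq m') (useq m') (eseq m') with hd
      have h4 : ‖xseq m a - xseq m' a‖ + ku * (∫ t in Icc a b, ‖useq m t - useq m' t‖)
          ≤ (1 + ku) * d := by
        have := mul_le_mul_of_nonneg_left h3 hku
        nlinarith
      calc ‖xseq m t - xseq m' t‖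
          ≤ (‖xseq m a - xseq m' a‖ + ku * ∫ t in Icc a b, ‖useq m t - useq m' t‖) *
            Real.exp (kx * (b - a)) := h1
        _ ≤ ((1 + ku) * d) * Real.exp (kx * (b - a)) :=
            mul_le_mul_of_nonneg_right h4 hexp.le
        _ = Ec * d := by rw [hEc]; ring
    have hxcau : ∀ t ∈ Icc a b, CauchySeq (fun i => xseq i t) := by
      intro t ht
      rw [Metric.cauchySeq_iff]
      intro δ hδ
      obtain ⟨N, hN⟩ := hcauchy (δ / Ec) (by positivity)
      refine ⟨N, fun m hm m' hm' => ?_⟩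
      rw [dist_eq_norm]
      calc ‖xseq m t - xseq m' t‖ ≤ Ec * _ := hkey m m' t ht
        _ < Ec * (δ / Ec) := by
            exact mul_lt_mul_of_pos_left (hN m hm m' hm') hEcpos
        _ = δ := by field_simp
    have hxlim : ∀ t, ∃ L : Vec n, t ∈ Icc a b → Tendsto (fun i => xseq i t) atTop (𝓝 L) := by
      intro t
      by_cases ht : t ∈ Icc a b
      · obtain ⟨L, hL⟩ := cauchySeq_tendsto_of_complete (hxcau t ht)
        exact ⟨L, fun _ => hL⟩
      · exact ⟨0, fun h => absurd h ht⟩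
    choose x hx using hxlim
    have hxa : Tendsto (fun i => xseq i a) atTop (𝓝 (x a)) := hx a haI
    -- measurability of x
    have hxmeas : AEStronglyMeasurable x μ := by
      apply aestronglyMeasurable_of_tendsto_ae atTop
        (fun i => ((hin i).contOn hab').aestronglyMeasurable measurableSet_Icc)
      exact (ae_restrict_iff' measurableSet_Icc).2 (Eventually.of_forall fun t ht => hx t ht)
    -- the tube
    have htube : ∀ t ∈ Icc a b, ‖x t - xstar t‖ ≤ ε := by
      intro t ht
      have h1 : Tendsto (fun i => ‖xseq i t - xstar t‖) atTop (𝓝 ‖x t - xstar t‖) :=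
        ((hx t ht).sub tendsto_const_nhds).norm
      exact le_of_tendsto h1 (Eventually.of_forall fun i => (hin i).2.2.2.2 t ht)
    have hxb : ∀ i, ∀ t ∈ Icc a b, ‖xseq i t - x t‖ ≤ 2 * ε := by
      intro i t ht
      have h1 := (hin i).2.2.2.2 t ht
      have h2 := htube t ht
      have h3 := norm_add_le (xseq i t - xstar t) (xstar t - x t)
      rw [norm_sub_rev (xstar t)] at h3
      have h4 : xseq i t - xstar t + (xstar t - x t) = xseq i t - x t := by abel
      rw [h4] at h3
      linarith
    -- ∫ ‖xseq (ns j) - x‖ → 0 by dominated convergence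
    have hxjmeas : ∀ i, AEStronglyMeasurable (fun t => ‖xseq i t - x t‖) μ :=
      fun i => ((((hin i).contOn hab').aestronglyMeasurable measurableSet_Icc).sub hxmeas).norm
    have hIx : Tendsto (fun j => ∫ t in Icc a b, ‖xseq (ns j) t - x t‖) atTop (𝓝 0) := by
      have h0 := tendsto_integral_of_dominated_convergence (μ := μ)
        (F := fun j t => ‖xseq (ns j) t - x t‖) (f := fun _ => (0:ℝ))
        (bound := fun _ => 2 * ε) (fun j => hxjmeas (ns j)) (integrable_const _)
        ?_ ?_
      · simpa using h0
      · intro j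
        filter_upwards [ae_restrict_mem measurableSet_Icc] with t ht
        rw [Real.norm_eq_abs, abs_of_nonneg (norm_nonneg _)]
        exact hxb (ns j) t ht
      · filter_upwards [ae_restrict_mem measurableSet_Icc] with t ht
        have h1 : Tendsto (fun j => xseq (ns j) t) atTop (𝓝 (x t)) :=
          (hx t ht).comp hns_mono.tendsto_atTop
        have := (h1.sub (tendsto_const_nhds (x := x t))).norm
        simpa using this
    -- derivative integrands
    set G : ℕ → ℝ → Vec n := fun i s => f s (xseq i s) (useq i s) with hG
    have hGrep : ∀ i, ∀ t ∈ Icc a b, xseq i t = xseq i a + ∫ s in a..t, G i s := by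
      intro i
      obtain ⟨-, -, ⟨x', hint, hrep, haeq⟩, -, -⟩ := hin i
      intro t ht
      rw [hrep t ht]
      congr 1
      apply intervalIntegral.integral_congr_ae
      have h2 := (ae_restrict_iff' measurableSet_Icc).1 haeq
      filter_upwards [h2] with s hs hsmem
      rw [uIoc_of_le ht.1] at hsmem
      exact hs ⟨hsmem.1.le, hsmem.2.trans ht.2⟩
    have hGint : ∀ i, Integrable (G i) μ := by
      intro i
      obtain ⟨-, -, ⟨x', hint, -, haeq⟩, -, -⟩ := hin i
      exact hint.congr haeq
    set Glim : ℝ → Vec n := fun s => f s (x s) (u s) with hGlim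
    have hGlimmeas : AEStronglyMeasurable Glim μ := by
      have h1 : AEMeasurable (fun s => (s, x s, u s)) μ :=
        aemeasurable_id.prodMk (hxmeas.aemeasurable.prodMk humeasW.aemeasurable)
      exact (hfmeas.comp_aemeasurable h1).aestronglyMeasurable
    have husnorm : ∀ᵐ s ∂μ, ‖u s‖ ≤ c := humem.mp (hbdd.mono fun t hb hmem' => hb _ hmem')
    have h0norm : ∀ᵐ s ∂μ, ‖useq 0 s‖ ≤ c := (hin 0).norm_ctrl_le hbdd
    have hbd0 : ∀ᵐ s ∂μ, ‖Glim s - G 0 s‖ ≤ kx * (2 * ε) + ku * (2 * c) := by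
      filter_upwards [hflip, humem, (hin 0).2.1, husnorm, h0norm,
        ae_restrict_mem measurableSet_Icc] with s h1 h2 h3 h4 h5 hs
      have h6 := h1 (x s) (xseq 0 s) (u s) h2 (useq 0 s) h3
      have h7 : ‖x s - xseq 0 s‖ ≤ 2 * ε := by
        rw [norm_sub_rev]; exact hxb 0 s hs
      have h8 : ‖u s - useq 0 s‖ ≤ 2 * c := by
        have := norm_sub_le (u s) (useq 0 s); linarith
      have h9 := mul_le_mul_of_nonneg_left h7 hkx
      have h10 := mul_le_mul_of_nonneg_left h8 hku
      calc ‖Glim s - G 0 s‖ ≤ kx * ‖x s - xseq 0 s‖ + ku * ‖u s - useq 0 s‖ := h6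
        _ ≤ kx * (2 * ε) + ku * (2 * c) := by linarith
    have hGlimint : Integrable Glim μ := by
      apply Integrable.mono'
        ((hGint 0).norm.add (integrable_const (kx * (2 * ε) + ku * (2 * c)))) hGlimmeas
      filter_upwards [hbd0] with s hs
      calc ‖Glim s‖ = ‖G 0 s + (Glim s - G 0 s)‖ := by congr 1; abel
        _ ≤ ‖G 0 s‖ + ‖Glim s - G 0 s‖ := norm_add_le _ _
        _ ≤ ‖G 0 s‖ + (kx * (2 * ε) + ku * (2 * c)) := by linarith
    have hdiff : ∀ i, ∀ᵐ s ∂μ, ‖G i s - Glim s‖ ≤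
        kx * ‖xseq i s - x s‖ + ku * ‖useq i s - u s‖ := by
      intro i
      filter_upwards [hflip, humem, (hin i).2.1] with s h1 h2 h3
      exact h1 _ _ _ h3 _ h2
    -- integrability of the comparison functions
    have hxdint : ∀ i, Integrable (fun t => ‖xseq i t - x t‖) μ := by
      intro i
      apply Integrable.mono' (integrable_const (2 * ε)) (hxjmeas i)
      filter_upwards [ae_restrict_mem measurableSet_Icc] with t ht
      rw [Real.norm_eq_abs, abs_of_nonneg (norm_nonneg _)]
      exact hxb i t ht
    have hudint : ∀ i, Integrable (fun t => ‖useq i t - u t‖) μ :=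
      fun i => ((hui i).sub huint).norm
    -- convergence of primitives
    have hIt : ∀ t ∈ Icc a b, Tendsto (fun j => ∫ s in a..t, G (ns j) s) atTop
        (𝓝 (∫ s in a..t, Glim s)) := by
      intro t ht
      have hsubI : Icc a t ⊆ Icc a b := Icc_subset_Icc le_rfl ht.2
      have hGOn : ∀ i, IntegrableOn (G i) (Icc a b) := fun i => hGint i
      have hGlimOn : IntegrableOn Glim (Icc a b) := hGlimint
      have hiiG : ∀ i, IntervalIntegrable (G i) volume a t := by
        intro i
        apply IntegrableOn.intervalIntegrable
        rw [uIcc_of_le ht.1]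
        exact (hGOn i).mono_set hsubI
      have hiiGlim : IntervalIntegrable Glim volume a t := by
        apply IntegrableOn.intervalIntegrable
        rw [uIcc_of_le ht.1]
        exact hGlimOn.mono_set hsubI
      rw [tendsto_iff_norm_sub_tendsto_zero]
      apply squeeze_zero (fun j => norm_nonneg _)
        (g := fun j => kx * (∫ s in Icc a b, ‖xseq (ns j) s - x s‖)
          + ku * ∫ s in Icc a b, ‖useq (ns j) s - u s‖)
      · intro j
        have e1 : (∫ s in a..t, G (ns j) s) - ∫ s in a..t, Glim s
            = ∫ s in a..t, (G (ns j) s - Glim s) := by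
          rw [intervalIntegral.integral_sub (hiiG (ns j)) hiiGlim]
        rw [e1]
        have e2 := intervalIntegral.norm_integral_le_integral_norm (μ := volume) (f := fun s => G (ns j) s - Glim s) ht.1
        have e3 : (∫ s in a..t, ‖G (ns j) s - Glim s‖)
            ≤ ∫ s in Icc a b, ‖G (ns j) s - Glim s‖ := by
          rw [intervalIntegral.integral_of_le ht.1]
          apply setIntegral_mono_set (((hGint (ns j)).sub hGlimint).norm)
          · exact Eventually.of_forall fun s => norm_nonneg _
          · exact (Ioc_subset_Icc_self.trans hsubI).eventuallyLE
        have e4 : (∫ s in Icc a b, ‖G (ns j) s - Glim s‖)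
            ≤ ∫ s in Icc a b, (kx * ‖xseq (ns j) s - x s‖ + ku * ‖useq (ns j) s - u s‖) := by
          apply integral_mono_ae (((hGint (ns j)).sub hGlimint).norm)
            (((hxdint (ns j)).const_mul kx).add ((hudint (ns j)).const_mul ku))
          exact hdiff (ns j)
        have e5 : (∫ s in Icc a b, (kx * ‖xseq (ns j) s - x s‖ + ku * ‖useq (ns j) s - u s‖))
            = kx * (∫ s in Icc a b, ‖xseq (ns j) s - x s‖)
              + ku * ∫ s in Icc a b, ‖useq (ns j) s - u s‖ := by
          rw [integral_add ((hxdint (ns j)).const_mul kx) ((hudint (ns j)).const_mul ku),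
            MeasureTheory.integral_const_mul, MeasureTheory.integral_const_mul]
        linarith
      · have h1 : Tendsto (fun j => ∫ s in Icc a b, ‖useq (ns j) s - u s‖) atTop (𝓝 0) :=
          hL1.comp hns_mono.tendsto_atTop
        have := (hIx.const_mul kx).add (h1.const_mul ku)
        simpa using this
    -- the integral identity for the limit
    have hrepx : ∀ t ∈ Icc a b, x t = x a + ∫ s in a..t, Glim s := by
      intro t ht
      have h1 : Tendsto (fun j => xseq (ns j) t) atTop (𝓝 (x t)) :=
        (hx t ht).comp hns_mono.tendsto_atTop
      have h2 : Tendsto (fun j => xseq (ns j) a + ∫ s in a..t, G (ns j) s) atTop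
          (𝓝 (x a + ∫ s in a..t, Glim s)) :=
        (hxa.comp hns_mono.tendsto_atTop).add (hIt t ht)
      have h3 : (fun j => xseq (ns j) t)
          = fun j => xseq (ns j) a + ∫ s in a..t, G (ns j) s :=
        funext fun j => hGrep (ns j) t ht
      rw [h3] at h1
      exact tendsto_nhds_unique h1 h2
    -- membership in C
    have hmemC : (x a, e) ∈ C :=
      hC.mem_of_tendsto (hxa.prodMk_nhds he)
        (Eventually.of_forall fun i => (hin i).2.2.2.1)
    -- conclusion
    refine ⟨x, u, e, ⟨humeasW, humem, ⟨Glim, hGlimint, hrepx, Eventually.of_forall fun t => rfl⟩,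
      hmemC, htube⟩, ?_⟩
    have hxa0 : Tendsto (fun i => ‖xseq i a - x a‖) atTop (𝓝 0) := by
      have := (hxa.sub (tendsto_const_nhds (x := x a))).norm
      simpa using this
    have he0 : Tendsto (fun i => ‖eseq i - e‖) atTop (𝓝 0) := by
      have := (he.sub (tendsto_const_nhds (x := e))).norm
      simpa using this
    have := (hxa0.add he0).add hL1
    simp only [add_zero] at this
    unfold dV
    exact this


end
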